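/- Let (Ω, F, P) be a probability space, (S, 𝒮) and (E, ℰ) measurable spaces, θ : Ω → S and Y : Ω → E measurable maps, π the distribution of θ on S, λ a σ-finite measure on E, and ψ : S × E → [0,∞) a bounded jointly measurable function. Assume that the joint distribution of (θ, Y) on S × E has density ψ with respect to the product measure π ⊗ λ, i.e., P((θ,Y) ∈ C) = ∫_C ψ(z,y) d(π ⊗ λ)(z,y) for every measurable C ⊆ S × E. Assume moreover that ∫_S ψ(z, Y(ω)) π(dz) > 0 for P-almost every ω. Then for every bounded measurable f : S → ℝ, E[f(θ) | σ(Y)] = (∫_S f(z) ψ(z, Y) π(dz)) / (∫_S ψ(z, Y) π(dz)), P-almost surely. -/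

import Mathlib

open MeasureTheory ProbabilityTheory
open scoped NNReal ENNReal

/-- Bayes-ratio (Kallianpur–Striebel type) formula: if the joint law of `(θ, Y)` has
bounded density `ψ` with respect to `π ⊗ λ`, where `π` is the law of `θ`, then
`E[f(θ) | σ(Y)] = (∫ f(z) ψ(z, Y) π(dz)) / (∫ ψ(z, Y) π(dz))` a.s. -/
theorem bayes_ratio_formula
    {Ω S E : Type*} [m0 : MeasurableSpace Ω] [MeasurableSpace S] [MeasurableSpace E]
    {μ : Measure Ω} [IsProbabilityMeasure μ]
    (θ : Ω → S) (Y : Ω → E) (hθ : Measurable θ) (hY : Measurable Y)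
    (lam : Measure E) [SigmaFinite lam]
    (ψ : S → E → ℝ)
    (hψmeas : Measurable (Function.uncurry ψ))
    (hψnonneg : ∀ z y, 0 ≤ ψ z y)
    (hψbdd : ∃ C : ℝ, ∀ z y, ψ z y ≤ C)
    (hdensity : ∀ C : Set (S × E), MeasurableSet C →
      μ ((fun ω => (θ ω, Y ω)) ⁻¹' C)
        = ∫⁻ p in C, ENNReal.ofReal (ψ p.1 p.2) ∂((μ.map θ).prod lam))
    (hpos : ∀ᵐ ω ∂μ, 0 < ∫ z, ψ z (Y ω) ∂(μ.map θ)) :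
    ∀ f : S → ℝ, Measurable f → (∃ C : ℝ, ∀ z, |f z| ≤ C) →
      μ[(fun ω => f (θ ω)) | MeasurableSpace.comap Y inferInstance]
        =ᵐ[μ] fun ω => (∫ z, f z * ψ z (Y ω) ∂(μ.map θ)) / ∫ z, ψ z (Y ω) ∂(μ.map θ) := by
  obtain ⟨Cψ, hCψ⟩ := hψbdd
  rintro f hf ⟨Cf₀, hCf₀⟩
  set Cf : ℝ := max Cf₀ 0 with hCf_def
  have hCf : ∀ z, |f z| ≤ Cf := fun z => (hCf₀ z).trans (le_max_left _ _)
  have hCfnn : (0:ℝ) ≤ Cf := le_max_right _ _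
  set π : Measure S := μ.map θ with hπ
  haveI : IsProbabilityMeasure π := Measure.isProbabilityMeasure_map hθ.aemeasurable
  set ρ : Measure (S × E) := π.prod lam with hρ
  set D : S × E → ℝ≥0 := fun p => (ψ p.1 p.2).toNNReal with hD
  have hDmeas : Measurable D :=
    (hψmeas.comp measurable_id).real_toNNReal
  have hDcoe : ∀ p : S × E, ((D p : ℝ≥0∞)) = ENNReal.ofReal (ψ p.1 p.2) := fun p => rfl
  have hDr : ∀ p : S × E, ((D p : ℝ)) = ψ p.1 p.2 := fun p =>
    Real.coe_toNNReal _ (hψnonneg _ _)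
  -- joint law
  have hν : μ.map (fun ω => (θ ω, Y ω)) = ρ.withDensity (fun p => (D p : ℝ≥0∞)) := by
    ext s hs
    rw [Measure.map_apply (hθ.prodMk hY) hs, hdensity s hs, withDensity_apply _ hs]
    exact lintegral_congr fun p => (hDcoe p).symm
  haveI : IsProbabilityMeasure (μ.map fun ω => (θ ω, Y ω)) :=
    Measure.isProbabilityMeasure_map (hθ.prodMk hY).aemeasurable
  -- ψ is integrable w.r.t. ρ
  have hψint : Integrable (fun p : S × E => ψ p.1 p.2) ρ := by
    refine ⟨(hψmeas.comp measurable_id).aestronglyMeasurable, ?_⟩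
    have h1 : ∫⁻ p, ‖ψ p.1 p.2‖ₑ ∂ρ
        = (ρ.withDensity fun p => (D p : ℝ≥0∞)) Set.univ := by
      rw [withDensity_apply _ MeasurableSet.univ, Measure.restrict_univ]
      exact lintegral_congr fun p => by
        rw [hDcoe, Real.enorm_eq_ofReal (hψnonneg _ _)]
    rw [HasFiniteIntegral, h1, ← hν]
    simp
  -- slice-wise properties
  have hψy_meas : ∀ y, Measurable (fun z => ψ z y) := fun y =>
    hψmeas.comp (measurable_id.prodMk measurable_const)
  have hψy_int : ∀ y, Integrable (fun z => ψ z y) π := fun y =>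
    ⟨(hψy_meas y).aestronglyMeasurable,
      HasFiniteIntegral.of_bounded (C := Cψ) (Filter.Eventually.of_forall fun z => by
        rw [Real.norm_eq_abs, abs_of_nonneg (hψnonneg _ _)]; exact hCψ _ _)⟩
  have hfψy_int : ∀ y, Integrable (fun z => f z * ψ z y) π := fun y =>
    (hψy_int y).bdd_mul hf.aestronglyMeasurable
      (c := Cf) (Filter.Eventually.of_forall fun z => by rw [Real.norm_eq_abs]; exact hCf z)
  set N : E → ℝ := fun y => ∫ z, ψ z y ∂π with hN
  set M : E → ℝ := fun y => ∫ z, f z * ψ z y ∂π with hM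
  set g : E → ℝ := fun y => M y / N y with hg
  have hNnonneg : ∀ y, 0 ≤ N y := fun y => integral_nonneg fun z => hψnonneg z y
  have hMN : ∀ y, |M y| ≤ Cf * N y := by
    intro y
    calc |M y| ≤ ∫ z, |f z * ψ z y| ∂π := by
          simpa only [Real.norm_eq_abs] using
            norm_integral_le_integral_norm (μ := π) fun z => f z * ψ z y
      _ ≤ ∫ z, Cf * ψ z y ∂π := by
          refine integral_mono (hfψy_int y).abs ((hψy_int y).const_mul Cf) fun z => ?_
          rw [abs_mul, abs_of_nonneg (hψnonneg z y)]
          exact mul_le_mul_of_nonneg_right (hCf z) (hψnonneg z y)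
      _ = Cf * N y := integral_const_mul _ _
  have hgN : ∀ y, N y * g y = M y := by
    intro y
    rcases eq_or_ne (N y) 0 with h0 | h0
    · have hzero : (fun z => ψ z y) =ᵐ[π] 0 :=
        (integral_eq_zero_iff_of_nonneg (fun z => hψnonneg z y) (hψy_int y)).mp h0
      have hM0 : M y = 0 := by
        rw [hM]
        refine integral_eq_zero_of_ae (hzero.mono fun z hz => ?_)
        simp only [Pi.zero_apply] at hz ⊢
        rw [hz, mul_zero]
      simp [hg, hM0, h0]
    · rw [hg, mul_comm]
      exact div_mul_cancel₀ _ h0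
  have hgbdd : ∀ y, |g y| ≤ Cf := by
    intro y
    rcases eq_or_ne (N y) 0 with h0 | h0
    · simp [hg, h0, hCfnn]
    · have hNpos : 0 < N y := lt_of_le_of_ne (hNnonneg y) (Ne.symm h0)
      rw [hg, abs_div, abs_of_pos hNpos, div_le_iff₀ hNpos]
      calc |M y| ≤ Cf * N y := hMN y
        _ = Cf * N y := rfl
  have hNsm : StronglyMeasurable N :=
    hψmeas.stronglyMeasurable.integral_prod_left
  have hMsm : StronglyMeasurable M := by
    have : Measurable (Function.uncurry fun z y => f z * ψ z y) :=
      (hf.comp measurable_fst).mul hψmeas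
    exact this.stronglyMeasurable.integral_prod_left
  have hgm : Measurable g := hMsm.measurable.div hNsm.measurable
  -- marginal law of Y
  have hmapY : μ.map Y = lam.withDensity fun y => ((N y).toNNReal : ℝ≥0∞) := by
    ext t ht
    rw [Measure.map_apply hY ht, withDensity_apply _ ht]
    have hpre : Y ⁻¹' t = (fun ω => (θ ω, Y ω)) ⁻¹' (Set.univ ×ˢ t) := by
      ext ω; simp
    rw [hpre, hdensity _ (MeasurableSet.univ.prod ht)]
    have hrestrict : ρ.restrict (Set.univ ×ˢ t) = π.prod (lam.restrict t) := by
      rw [← Measure.prod_restrict, Measure.restrict_univ]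
    calc ∫⁻ p in Set.univ ×ˢ t, ENNReal.ofReal (ψ p.1 p.2) ∂ρ
        = ∫⁻ p, ENNReal.ofReal (ψ p.1 p.2) ∂(π.prod (lam.restrict t)) := by
          rw [hrestrict]
      _ = ∫⁻ y, ∫⁻ z, ENNReal.ofReal (ψ z y) ∂π ∂(lam.restrict t) :=
          lintegral_prod_symm _ (ENNReal.measurable_ofReal.comp hψmeas).aemeasurable
      _ = ∫⁻ y in t, ((N y).toNNReal : ℝ≥0∞) ∂lam := by
          refine lintegral_congr fun y => ?_
          rw [← ofReal_integral_eq_lintegral_ofReal (hψy_int y)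
            (Filter.Eventually.of_forall fun z => hψnonneg z y)]
          rfl
  -- integrability of composed processes
  have hfθint : Integrable (fun ω => f (θ ω)) μ :=
    ⟨(hf.comp hθ).aestronglyMeasurable,
      HasFiniteIntegral.of_bounded (C := Cf) (Filter.Eventually.of_forall fun ω => by
        rw [Real.norm_eq_abs]; exact hCf _)⟩
  have hgYint : Integrable (fun ω => g (Y ω)) μ :=
    ⟨(hgm.comp hY).aestronglyMeasurable,
      HasFiniteIntegral.of_bounded (C := Cf) (Filter.Eventually.of_forall fun ω => by
        rw [Real.norm_eq_abs]; exact hgbdd _)⟩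
  -- key set-integral identities
  have hA : ∀ t : Set E, MeasurableSet t →
      ∫ ω in Y ⁻¹' t, f (θ ω) ∂μ = ∫ y in t, M y ∂lam := by
    intro t ht
    have hst : MeasurableSet ((Set.univ : Set S) ×ˢ t) := MeasurableSet.univ.prod ht
    have hpre : Y ⁻¹' t = (fun ω => (θ ω, Y ω)) ⁻¹' ((Set.univ : Set S) ×ˢ t) := by ext ω; simp
    have hrestrict : ρ.restrict ((Set.univ : Set S) ×ˢ t) = π.prod (lam.restrict t) := by
      rw [← Measure.prod_restrict, Measure.restrict_univ]
    have hint1 : Integrable (fun p : S × E => f p.1 * ψ p.1 p.2) ρ :=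
      hψint.bdd_mul (hf.comp measurable_fst).aestronglyMeasurable
        (c := Cf) (Filter.Eventually.of_forall fun p => by rw [Real.norm_eq_abs]; exact hCf _)
    have hint2 : Integrable (fun p : S × E => ψ p.1 p.2 * f p.1) (π.prod (lam.restrict t)) := by
      rw [← hrestrict]
      exact (hint1.restrict.congr (Filter.Eventually.of_forall fun p => mul_comm _ _))
    have e1 : ∫ p in (Set.univ : Set S) ×ˢ t, (fun p : S × E => f p.1) p
          ∂(μ.map fun ω => (θ ω, Y ω))
        = ∫ ω in (fun ω => (θ ω, Y ω)) ⁻¹' ((Set.univ : Set S) ×ˢ t), f (θ ω) ∂μ :=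
      setIntegral_map hst (hf.comp measurable_fst).aestronglyMeasurable
        (hθ.prodMk hY).aemeasurable
    calc ∫ ω in Y ⁻¹' t, f (θ ω) ∂μ
        = ∫ p in (Set.univ : Set S) ×ˢ t, (fun p : S × E => f p.1) p
            ∂(μ.map fun ω => (θ ω, Y ω)) := by rw [hpre, e1]
      _ = ∫ p in (Set.univ : Set S) ×ˢ t, D p • (fun p : S × E => f p.1) p ∂ρ := by
          rw [hν, restrict_withDensity hst,
            integral_withDensity_eq_integral_smul hDmeas]
      _ = ∫ p in (Set.univ : Set S) ×ˢ t, ψ p.1 p.2 * f p.1 ∂ρ := by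
          refine integral_congr_ae (Filter.Eventually.of_forall fun p => ?_)
          show D p • f p.1 = ψ p.1 p.2 * f p.1
          rw [NNReal.smul_def, hDr, smul_eq_mul]
      _ = ∫ y in t, ∫ z, ψ z y * f z ∂π ∂lam := by
          rw [hrestrict]
          exact integral_prod_symm _ hint2
      _ = ∫ y in t, M y ∂lam := by
          refine integral_congr_ae (Filter.Eventually.of_forall fun y => ?_)
          exact integral_congr_ae (Filter.Eventually.of_forall fun z => mul_comm _ _)
  have hB : ∀ t : Set E, MeasurableSet t →
      ∫ ω in Y ⁻¹' t, g (Y ω) ∂μ = ∫ y in t, M y ∂lam := by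
    intro t ht
    have e1 : ∫ y in t, g y ∂(μ.map Y) = ∫ ω in Y ⁻¹' t, g (Y ω) ∂μ :=
      setIntegral_map ht hgm.aestronglyMeasurable hY.aemeasurable
    rw [← e1, hmapY, restrict_withDensity ht,
      integral_withDensity_eq_integral_smul hNsm.measurable.real_toNNReal]
    refine integral_congr_ae (Filter.Eventually.of_forall fun y => ?_)
    show (N y).toNNReal • g y = M y
    rw [NNReal.smul_def, Real.coe_toNNReal _ (hNnonneg y)]
    exact hgN y
  -- conclude via uniqueness of conditional expectation
  have hm : MeasurableSpace.comap Y inferInstance ≤ m0 := hY.comap_le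
  haveI : SigmaFinite (μ.trim hm) := inferInstance
  have hYc : Measurable[MeasurableSpace.comap Y inferInstance] Y :=
    Measurable.of_comap_le le_rfl
  show μ[(fun ω => f (θ ω)) | MeasurableSpace.comap Y inferInstance]
      =ᵐ[μ] fun ω => g (Y ω)
  refine (ae_eq_condExp_of_forall_setIntegral_eq hm hfθint
    (fun s _ _ => hgYint.integrableOn)
    (fun s hs _ => ?_)
    ((hgm.comp hYc).stronglyMeasurable.aestronglyMeasurable)).symm
  obtain ⟨t, ht, rfl⟩ := MeasurableSpace.measurableSet_comap.mp hs
  rw [hB t ht, hA t ht]
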